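/- Let f(X) be a polynomial with non-negative integer coefficients of degree n ≥ 2. If f(m) is a prime number for some integer m > n/π + 1, then f is irreducible over ℚ. -/

import Mathlib

/-- The open sector with vertex `v` on the real axis and half-angle `θ`:
complex numbers `z ≠ v` with `|arg (z - v)| < θ`. -/
def sector (v θ : ℝ) : Set ℂ :=
  {z : ℂ | z ≠ (v : ℂ) ∧ |Complex.arg (z - (v : ℂ))| < θ}

/-- The open upper half-sector: `z = v + ρ e^{iφ}` with `ρ > 0`, `0 < φ < θ`. -/
def sectorPlus (v θ : ℝ) : Set ℂ :=
  {z : ℂ | 0 < Complex.arg (z - (v : ℂ)) ∧ Complex.arg (z - (v : ℂ)) < θ}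

/-- The open lower half-sector: `z = v + ρ e^{iφ}` with `ρ > 0`, `-θ < φ < 0`. -/
def sectorMinus (v θ : ℝ) : Set ℂ :=
  {z : ℂ | -θ < Complex.arg (z - (v : ℂ)) ∧ Complex.arg (z - (v : ℂ)) < 0}

open Polynomial Complex Real

lemma aux_natdeg_map {R : Type*} [Ring R] [CharZero R] (f : ℤ[X]) :
    (f.map (Int.castRingHom R)).natDegree = f.natDegree :=
  Polynomial.natDegree_map_eq_of_injective Int.cast_injective f

lemma aux_eval_eq (f : ℤ[X]) (n : ℕ) (hdeg : f.natDegree = n) (r φ : ℝ) :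
    (f.map (Int.castRingHom ℂ)).eval ((r:ℂ) * Complex.exp (φ * Complex.I))
      = ∑ k ∈ Finset.range (n+1),
          ((f.coeff k : ℝ) : ℂ) * ((r^k : ℝ) : ℂ) * Complex.exp ((k * φ : ℝ) * Complex.I) := by
  have hd : (f.map (Int.castRingHom ℂ)).natDegree < n + 1 := by
    rw [aux_natdeg_map, hdeg]; omega
  rw [Polynomial.eval_eq_sum_range' hd]
  refine Finset.sum_congr rfl fun k _ => ?_
  rw [Polynomial.coeff_map]
  rw [mul_pow, ← Complex.exp_nat_mul]
  push_cast
  simp [Int.cast_injective]; push_cast; ring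

lemma aux_eval_im (f : ℤ[X]) (n : ℕ) (hdeg : f.natDegree = n) (r φ : ℝ) :
    ((f.map (Int.castRingHom ℂ)).eval ((r:ℂ) * Complex.exp (φ * Complex.I))).im
      = ∑ k ∈ Finset.range (n+1), (f.coeff k : ℝ) * r^k * Real.sin (k * φ) := by
  rw [aux_eval_eq f n hdeg r φ, Complex.im_sum]
  refine Finset.sum_congr rfl fun k _ => ?_
  simp only [← Complex.ofReal_natCast, ← Complex.ofReal_mul, ← Complex.ofReal_pow,
    Complex.mul_im, Complex.exp_ofReal_mul_I_im, Complex.exp_ofReal_mul_I_re,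
    Complex.ofReal_re, Complex.ofReal_im, zero_mul, mul_zero, add_zero, zero_add]

lemma aux_eval_re (f : ℤ[X]) (n : ℕ) (hdeg : f.natDegree = n) (r φ : ℝ) :
    ((f.map (Int.castRingHom ℂ)).eval ((r:ℂ) * Complex.exp (φ * Complex.I))).re
      = ∑ k ∈ Finset.range (n+1), (f.coeff k : ℝ) * r^k * Real.cos (k * φ) := by
  rw [aux_eval_eq f n hdeg r φ, Complex.re_sum]
  refine Finset.sum_congr rfl fun k _ => ?_
  simp only [← Complex.ofReal_natCast, ← Complex.ofReal_mul, ← Complex.ofReal_pow,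
    Complex.mul_re, Complex.mul_im, Complex.exp_ofReal_mul_I_im, Complex.exp_ofReal_mul_I_re,
    Complex.ofReal_re, Complex.ofReal_im, zero_mul, mul_zero, add_zero, zero_add, sub_zero]

lemma aux_sin (θ : ℝ) (h0 : 0 < θ) (h2 : θ ≤ π / 2) : θ ≤ (1 + θ) * Real.sin θ := by
  have hs0 : 0 ≤ Real.sin θ := Real.sin_nonneg_of_nonneg_of_le_pi h0.le
    (by nlinarith [Real.pi_pos])
  rcases le_or_gt (π/2 - 1) θ with h | h
  · have h3 := Real.mul_le_sin h0.le h2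
    have hπ := Real.pi_pos
    have h4 : 2 * θ ≤ π * Real.sin θ := by
      rw [div_mul_eq_mul_div, div_le_iff₀ hπ] at h3; linarith
    nlinarith [mul_le_mul_of_nonneg_right (show π ≤ 2 + 2*θ by linarith) hs0]
  · have h1 : θ ≤ 1 := by nlinarith [Real.pi_lt_d2]
    have h5 : θ - θ^3/4 < Real.sin θ := by
      have := Real.sin_gt_sub_cube h0; nlinarith [pow_pos h0 3]
    nlinarith [mul_nonneg (show (0:ℝ) ≤ 1 + θ by linarith)
      (show 0 ≤ Real.sin θ - (θ - θ^3/4) by linarith),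
      mul_nonneg (mul_nonneg h0.le h0.le) (show 0 ≤ 1 - θ by linarith),
      sq_nonneg θ, mul_pos h0 h0]

lemma aux_msin (n : ℕ) (hn : 2 ≤ n) (m : ℝ) (hm : (n:ℝ)/π + 1 < m) :
    1 < m * Real.sin (π / n) := by
  have hπ := Real.pi_pos
  have hn2 : (2:ℝ) ≤ n := by exact_mod_cast hn
  have hn0 : (0:ℝ) < n := by linarith
  set θ := π / (n:ℝ) with hθ
  have hθ0 : 0 < θ := by positivity
  have hθ2 : θ ≤ π/2 := by rw [hθ, div_le_div_iff₀ hn0 two_pos]; nlinarith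
  have hθn : θ * n = π := by rw [hθ]; field_simp
  have key := aux_sin θ hθ0 hθ2
  have hs : 0 < Real.sin θ := Real.sin_pos_of_pos_of_lt_pi hθ0 (by nlinarith)
  have hmθ : 1 + θ < θ * m := by
    have : θ * ((n:ℝ)/π + 1) < θ * m := by exact mul_lt_mul_of_pos_left hm hθ0
    have h6 : θ * ((n:ℝ)/π) = 1 := by rw [hθ]; field_simp
    nlinarith
  nlinarith [mul_pos (show 0 < θ * m - (1+θ) by linarith) hs]

lemma aux_key (n : ℕ) (hn : 2 ≤ n) (f : ℤ[X]) (hdeg : f.natDegree = n)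
    (hcoeff : ∀ i, 0 ≤ f.coeff i) (han : 1 ≤ f.coeff n)
    (m : ℤ) (hm : (n : ℝ) / Real.pi + 1 < (m : ℝ)) (z : ℂ)
    (hz : (f.map (Int.castRingHom ℂ)).eval z = 0) : 1 < ‖(m:ℂ) - z‖ := by
  have hπ := Real.pi_pos
  have hn2 : (2:ℝ) ≤ n := by exact_mod_cast hn
  have hn0 : (0:ℝ) < n := by linarith
  have hM1 : (1:ℝ) < (m:ℝ) := by
    have : 0 ≤ (n:ℝ)/Real.pi := by positivity
    linarith
  rcases eq_or_ne z 0 with rfl | hz0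
  · have : ((m:ℂ) - 0) = ((m:ℝ):ℂ) := by push_cast; ring
    rw [this, Complex.norm_real, Real.norm_eq_abs, abs_of_pos (by linarith)]
    exact hM1
  set r := ‖z‖ with hr
  set φ := Complex.arg z with hφ
  have hr0 : 0 < r := norm_pos_iff.2 hz0
  have hzeq : z = (r:ℂ) * Complex.exp ((φ:ℂ) * Complex.I) := by
    rw [hr, hφ]; exact (Complex.norm_mul_exp_arg_mul_I z).symm
  have hφπ : φ ≤ Real.pi := Complex.arg_le_pi z
  have hφπ' : -Real.pi < φ := Complex.neg_pi_lt_arg z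
  have hcast : ∀ k, (0:ℝ) ≤ (f.coeff k : ℝ) := fun k => by exact_mod_cast hcoeff k
  have hann : (1:ℝ) ≤ (f.coeff n : ℝ) := by exact_mod_cast han
  rcases le_or_gt (Real.pi / n) |φ| with hbig | hsmall
  · -- geometric case
    have hcos : Real.cos φ ≤ Real.cos (Real.pi / n) := by
      rw [← Real.cos_abs]
      exact Real.cos_le_cos_of_nonneg_of_le_pi (by positivity) (abs_le.2 ⟨hφπ'.le, hφπ⟩) hbig
    have hre : z.re = r * Real.cos φ := by
      rw [hzeq]; simp [Complex.mul_re, Complex.exp_ofReal_mul_I_re, Complex.exp_ofReal_mul_I_im]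
    have hrsq : z.re^2 + z.im^2 = r^2 := by
      rw [hr, Complex.sq_norm, Complex.normSq_apply]; ring
    have habs2 : (‖(m:ℂ) - z‖)^2 = ((m:ℝ) - z.re)^2 + z.im^2 := by
      rw [Complex.sq_norm, Complex.normSq_apply]
      simp [Complex.sub_re, Complex.sub_im]
      ring
    have hmsin := aux_msin n hn m hm
    have hA0 : 0 ≤ ‖(m:ℂ) - z‖ := norm_nonneg _
    have hsc := Real.sin_sq_add_cos_sq (Real.pi / n)
    have hrc : r * Real.cos φ ≤ r * Real.cos (Real.pi / n) :=
      mul_le_mul_of_nonneg_left hcos hr0.le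
    have hx : z.re ≤ r * Real.cos (Real.pi / n) := by rw [hre]; exact hrc
    have h1 : 1 < ((m:ℝ) * Real.sin (Real.pi / n))^2 :=
      (one_lt_pow_iff_of_nonneg (by linarith) two_ne_zero).2 hmsin
    have h4 : (‖(m:ℂ) - z‖)^2 = (m:ℝ)^2 - 2*((m:ℝ)*z.re) + r^2 := by
      rw [habs2]; linear_combination hrsq
    have h5 : (m:ℝ)*z.re ≤ (m:ℝ)*(r * Real.cos (Real.pi / n)) :=
      mul_le_mul_of_nonneg_left hx (by linarith)
    have hid : ((m:ℝ)^2 - 2*((m:ℝ)*(r * Real.cos (Real.pi / n))) + r^2)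
        = (r - (m:ℝ)*Real.cos (Real.pi/n))^2 + ((m:ℝ) * Real.sin (Real.pi/n))^2 := by
      linear_combination (-(m:ℝ)^2) * hsc
    have h6 : 1 < (‖(m:ℂ) - z‖)^2 := by
      have := sq_nonneg (r - (m:ℝ)*Real.cos (Real.pi/n))
      linarith
    exact (one_lt_pow_iff_of_nonneg hA0 two_ne_zero).1 h6
  · -- no roots in the small sector: contradiction
    exfalso
    have him := aux_eval_im f n hdeg r φ
    have hre' := aux_eval_re f n hdeg r φ
    rw [← hzeq, hz, Complex.zero_im] at him
    rw [← hzeq, hz, Complex.zero_re] at hre'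
    have habs' : |φ| < Real.pi / n := hsmall
    rcases lt_trichotomy φ 0 with hneg | hzero | hpos
    · -- φ < 0 : imaginary part is negative
      have habs2' : (-φ) * n < Real.pi := by
        rw [abs_of_neg hneg] at habs'
        exact (lt_div_iff₀ hn0).1 habs'
      have hpos' : 0 < ∑ k ∈ Finset.range (n+1),
          -((f.coeff k : ℝ) * r^k * Real.sin (k * φ)) := by
        apply Finset.sum_pos'
        · intro k hk
          have hk' : (k:ℝ) ≤ n := by
            exact_mod_cast Nat.le_of_lt_succ (Finset.mem_range.1 hk)
          have h1 : (k:ℝ) * φ ≤ 0 := mul_nonpos_of_nonneg_of_nonpos (Nat.cast_nonneg k) hneg.le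
          have h2 : -Real.pi ≤ (k:ℝ) * φ := by
            nlinarith [mul_nonneg (sub_nonneg.2 hk') (neg_nonneg.2 hneg.le)]
          have h3 := Real.sin_nonpos_of_nonpos_of_neg_pi_le h1 h2
          exact neg_nonneg.2 (mul_nonpos_of_nonneg_of_nonpos
            (mul_nonneg (hcast k) (pow_nonneg hr0.le k)) h3)
        · refine ⟨n, Finset.self_mem_range_succ n, ?_⟩
          have hsin : Real.sin ((n:ℝ) * φ) < 0 := by
            apply Real.sin_neg_of_neg_of_neg_pi_lt
            · exact mul_neg_of_pos_of_neg hn0 hneg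
            · linarith
          have hrn : (0:ℝ) < r^n := pow_pos hr0 n
          have h4 : (0:ℝ) < r^n * (-Real.sin ((n:ℝ)*φ)) := mul_pos hrn (by linarith)
          nlinarith [mul_le_mul_of_nonneg_right hann h4.le]
      rw [Finset.sum_neg_distrib] at hpos'
      linarith
    · -- φ = 0 : real part is positive
      rw [hzero] at hre'
      have hpos' : 0 < ∑ k ∈ Finset.range (n+1),
          (f.coeff k : ℝ) * r^k * Real.cos (k * 0) := by
        apply Finset.sum_pos'
        · intro k hk
          simp only [mul_zero, Real.cos_zero, mul_one]
          exact mul_nonneg (hcast k) (pow_nonneg hr0.le k)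
        · refine ⟨n, Finset.self_mem_range_succ n, ?_⟩
          simp only [mul_zero, Real.cos_zero, mul_one]
          have hrn : (0:ℝ) < r^n := pow_pos hr0 n
          nlinarith [mul_le_mul_of_nonneg_right hann hrn.le]
      linarith
    · -- φ > 0 : imaginary part is positive
      have habs3' : φ * n < Real.pi := by
        rw [abs_of_pos hpos] at habs'
        exact (lt_div_iff₀ hn0).1 habs'
      have hpos' : 0 < ∑ k ∈ Finset.range (n+1),
          (f.coeff k : ℝ) * r^k * Real.sin (k * φ) := by
        apply Finset.sum_pos'
        · intro k hk
          have hk' : (k:ℝ) ≤ n := by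
            exact_mod_cast Nat.le_of_lt_succ (Finset.mem_range.1 hk)
          have h1 : 0 ≤ (k:ℝ) * φ := mul_nonneg (Nat.cast_nonneg k) hpos.le
          have h2 : (k:ℝ) * φ ≤ Real.pi := by
            nlinarith [mul_nonneg (sub_nonneg.2 hk') hpos.le]
          have := Real.sin_nonneg_of_nonneg_of_le_pi h1 h2
          have := hcast k
          positivity
        · refine ⟨n, Finset.self_mem_range_succ n, ?_⟩
          have hsin : 0 < Real.sin ((n:ℝ) * φ) := by
            apply Real.sin_pos_of_pos_of_lt_pi
            · exact mul_pos hn0 hpos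
            · linarith
          have hrn : (0:ℝ) < r^n := pow_pos hr0 n
          have h4 : (0:ℝ) < r^n * Real.sin ((n:ℝ)*φ) := mul_pos hrn hsin
          nlinarith [mul_le_mul_of_nonneg_right hann h4.le]
      linarith

lemma aux_ms_prod (s : Multiset ℝ) (h : ∀ x ∈ s, (1:ℝ) ≤ x) : 1 ≤ s.prod := by
  induction s using Multiset.induction_on with
  | empty => simp
  | cons a t ih =>
    simp only [Multiset.prod_cons]
    have ha := h a (Multiset.mem_cons_self a t)
    have ht := ih (fun x hx => h x (Multiset.mem_cons_of_mem hx))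
    nlinarith

lemma aux_val (n : ℕ) (hn : 2 ≤ n) (f : ℤ[X]) (hdeg : f.natDegree = n)
    (hcoeff : ∀ i, 0 ≤ f.coeff i) (han : 1 ≤ f.coeff n)
    (m : ℤ) (hm : (n : ℝ) / Real.pi + 1 < (m : ℝ))
    (g : ℤ[X]) (hgf : g ∣ f) (hg1 : 1 ≤ g.natDegree) : 1 < |g.eval m| := by
  have hf0 : f ≠ 0 := by
    intro h; rw [h, Polynomial.natDegree_zero] at hdeg; omega
  have hg0 : g ≠ 0 := by
    rintro rfl; exact hf0 (zero_dvd_iff.1 hgf)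
  set G := g.map (Int.castRingHom ℂ) with hG
  have hG0 : G ≠ 0 := by
    rw [hG, Ne, Polynomial.map_eq_zero_iff Int.cast_injective]; exact hg0
  have hsplit : G.Splits := IsAlgClosed.splits G
  have hfact := hsplit.eq_prod_roots
  have hroots : ∀ a ∈ G.roots, 1 < ‖(m:ℂ) - a‖ := by
    intro a ha
    have haG : G.eval a = 0 := (Polynomial.isRoot_of_mem_roots ha)
    have hdvd : G ∣ f.map (Int.castRingHom ℂ) := Polynomial.map_dvd _ hgf
    have haf : (f.map (Int.castRingHom ℂ)).eval a = 0 := by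
      obtain ⟨q, hq⟩ := hdvd
      rw [hq, Polynomial.eval_mul, haG, zero_mul]
    exact aux_key n hn f hdeg hcoeff han m hm a haf
  have hcard : G.roots.card = G.natDegree := Polynomial.splits_iff_card_roots.1 hsplit
  have hGdeg : G.natDegree = g.natDegree := aux_natdeg_map g
  have hne : ∃ z, z ∈ G.roots := by
    apply Multiset.card_pos_iff_exists_mem.1
    rw [hcard, hGdeg]; omega
  obtain ⟨z₀, hz₀⟩ := hne
  obtain ⟨s, hs⟩ := Multiset.exists_cons_of_mem hz₀
  -- evaluate
  have heval : G.eval ((m:ℤ):ℂ) = ((g.eval m : ℤ) : ℂ) :=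
    Polynomial.eval_intCast_map (Int.castRingHom ℂ) g m
  have hnp : ∀ s : Multiset ℂ, ‖s.prod‖ = (s.map (fun x => ‖x‖)).prod :=
    fun s => map_multiset_prod (normHom : ℂ →*₀ ℝ) s
  have habs : ‖G.eval ((m:ℤ):ℂ)‖
      = ‖G.leadingCoeff‖
        * (G.roots.map (fun a => ‖(m:ℂ) - a‖)).prod := by
    conv_lhs => rw [hfact]
    rw [Polynomial.eval_mul, Polynomial.eval_C, norm_mul, Polynomial.eval_multiset_prod,
      Multiset.map_map, hnp, Multiset.map_map]
    congr 1
    apply congrArg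
    apply Multiset.map_congr rfl
    intro a _
    simp
  have hlead : 1 ≤ ‖G.leadingCoeff‖ := by
    have : G.leadingCoeff = (g.leadingCoeff : ℂ) :=
      Polynomial.leadingCoeff_map_of_injective Int.cast_injective g
    rw [this]
    have h1 : (1:ℤ) ≤ |g.leadingCoeff| :=
      Int.one_le_abs (Polynomial.leadingCoeff_ne_zero.2 hg0)
    calc (1:ℝ) ≤ |(g.leadingCoeff : ℝ)| := by exact_mod_cast h1
    _ = ‖((g.leadingCoeff : ℝ) : ℂ)‖ := by rw [Complex.norm_real, Real.norm_eq_abs]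
    _ = ‖((g.leadingCoeff : ℤ) : ℂ)‖ := by rw [Complex.ofReal_intCast]
  have hprod : 1 < (G.roots.map (fun a => ‖(m:ℂ) - a‖)).prod := by
    rw [hs, Multiset.map_cons, Multiset.prod_cons]
    have h1 := hroots z₀ hz₀
    have h2 : 1 ≤ (s.map (fun a => ‖(m:ℂ) - a‖)).prod := by
      apply aux_ms_prod
      intro x hx
      obtain ⟨a, ha, rfl⟩ := Multiset.mem_map.1 hx
      exact (hroots a (by rw [hs]; exact Multiset.mem_cons_of_mem ha)).le
    nlinarith
  have : 1 < ‖(((g.eval m : ℤ):ℂ))‖ := by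
    rw [← heval, habs]
    nlinarith [norm_nonneg G.leadingCoeff]
  rw [Complex.norm_intCast] at this
  exact_mod_cast this

theorem stmt_12 (n : ℕ) (hn : 2 ≤ n) (f : Polynomial ℤ) (hdeg : f.natDegree = n)
    (hcoeff : ∀ i, 0 ≤ f.coeff i)
    (m : ℤ) (hm : (n : ℝ) / Real.pi + 1 < (m : ℝ))
    (p : ℕ) (hp : p.Prime) (hfm : f.eval m = (p : ℤ)) :
    Irreducible (f.map (Int.castRingHom ℚ)) := by
  have hf0 : f ≠ 0 := by
    intro h; rw [h, Polynomial.natDegree_zero] at hdeg; omega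
  have han : 1 ≤ f.coeff n := by
    have h1 := hcoeff n
    have h2 := Polynomial.leadingCoeff_ne_zero.2 hf0
    rw [Polynomial.leadingCoeff, hdeg] at h2
    omega
  have hpZ : Prime ((p:ℕ):ℤ) := Nat.prime_iff_prime_int.1 hp
  have hprim : f.IsPrimitive := by
    intro r hr
    obtain ⟨q, hq⟩ := hr
    have hr0 : r ≠ 0 := by rintro rfl; rw [map_zero, zero_mul] at hq; exact hf0 hq
    have hq0 : q ≠ 0 := by rintro rfl; rw [mul_zero] at hq; exact hf0 hq
    have hqdeg : q.natDegree = n := by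
      have := Polynomial.natDegree_mul (fun h => hr0 (Polynomial.C_eq_zero.1 h)) hq0
      rw [← hq, Polynomial.natDegree_C, hdeg] at this
      omega
    have heval : r * q.eval m = (p:ℤ) := by
      rw [← hfm, hq, Polynomial.eval_mul, Polynomial.eval_C]
    have hq1 : 1 < |q.eval m| :=
      aux_val n hn f hdeg hcoeff han m hm q ⟨Polynomial.C r, by rw [hq]; ring⟩ (by omega)
    rcases hpZ.irreducible.isUnit_or_isUnit heval.symm with h | h
    · exact h
    · exfalso
      rcases Int.isUnit_iff.1 h with h' | h' <;> rw [h'] at hq1 <;> simp at hq1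
  have hirr : Irreducible f := by
    constructor
    · intro hu
      have := Polynomial.natDegree_eq_zero_of_isUnit hu; omega
    · intro a b hab
      have ha0 : a ≠ 0 := by rintro rfl; rw [zero_mul] at hab; exact hf0 hab
      have hb0 : b ≠ 0 := by rintro rfl; rw [mul_zero] at hab; exact hf0 hab
      have heval : ((p:ℕ):ℤ) = a.eval m * b.eval m := by
        rw [← hfm, hab, Polynomial.eval_mul]
      rcases hpZ.irreducible.isUnit_or_isUnit heval with h | h
      · left
        have hadeg : a.natDegree = 0 := by
          by_contra hd
          have h1 := aux_val n hn f hdeg hcoeff han m hm a ⟨b, hab⟩ (by omega)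
          rcases Int.isUnit_iff.1 h with h' | h' <;> rw [h'] at h1 <;> simp at h1
        rw [Polynomial.eq_C_of_natDegree_eq_zero hadeg]
        apply Polynomial.isUnit_C.2
        have : a.eval m = a.coeff 0 := by
          conv_lhs => rw [Polynomial.eq_C_of_natDegree_eq_zero hadeg]
          rw [Polynomial.eval_C]
        rwa [this] at h
      · right
        have hbdeg : b.natDegree = 0 := by
          by_contra hd
          have h1 := aux_val n hn f hdeg hcoeff han m hm b ⟨a, by rw [hab]; ring⟩ (by omega)
          rcases Int.isUnit_iff.1 h with h' | h' <;> rw [h'] at h1 <;> simp at h1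
        rw [Polynomial.eq_C_of_natDegree_eq_zero hbdeg]
        apply Polynomial.isUnit_C.2
        have : b.eval m = b.coeff 0 := by
          conv_lhs => rw [Polynomial.eq_C_of_natDegree_eq_zero hbdeg]
          rw [Polynomial.eval_C]
        rwa [this] at h
  exact (Polynomial.IsPrimitive.Int.irreducible_iff_irreducible_map_cast hprim).1 hirr
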